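/- arXiv:2308.15887 — 6 statements merged into one kernel-verified Lean document; each statement's English description precedes it below -/
import Mathlib

section
/- (Main Proposition) There is no C-complete CLIP-like model: if C = (f, g) is a CLIP-like model, I is describable by A, and (I, A) is separable, then C cannot simultaneously respect basic descriptions, negation, disjunction, and conjunction. -/
open scoped RealInnerProductSpace

/-- Cosine similarity between two vectors in a real inner product space. -/
noncomputable def cosSim {L : Type*} [NormedAddCommGroup L] [InnerProductSpace ℝ L]
    (x y : L) : ℝ := ⟪x, y⟫ / (‖x‖ * ‖y‖)

/-- Propositional formulas over a set `A` of atomic descriptions. -/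
inductive Formula (A : Type*) : Type _
  | atom : A → Formula A
  | neg  : Formula A → Formula A
  | or   : Formula A → Formula A → Formula A
  | and  : Formula A → Formula A → Formula A

variable {I A L : Type*} [NormedAddCommGroup L] [InnerProductSpace ℝ L]

/-- Satisfaction `i ⊨ d`, defined by recursion on the formula `d`. -/
def Sat (f : I → L) (g : Formula A → L) (i : I) : Formula A → Prop
  | .atom a => cosSim (f i) (g (.atom a)) > cosSim (f i) (g (.neg (.atom a)))
  | .neg d  => ¬ Sat f g i d
  | .or d e => Sat f g i d ∨ Sat f g i e
  | .and d e => Sat f g i d ∧ Sat f g i e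

/-- `I` is describable by `A`. -/
def Describable (f : I → L) (g : Formula A → L) : Prop :=
  (∀ i : I, ∃ a : A, Sat f g i (.atom a)) ∧ (∀ a : A, ∃ i : I, Sat f g i (.atom a))

/-- `(I, A)` is separable. -/
def Separable (f : I → L) (g : Formula A → L) : Prop :=
  (∀ i : I, ∃ a : A, Sat f g i (.neg (.atom a))) ∧
  (∀ a : A, ∃ i : I, Sat f g i (.neg (.atom a)))

/-- `C` respects basic descriptions. -/
def RespectsBasic (f : I → L) (g : Formula A → L) : Prop :=
  ∀ (i : I) (a : A), Sat f g i (.atom a) → cosSim (f i) (g (.atom a)) = 1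

/-- `C` respects negation. -/
def RespectsNeg (f : I → L) (g : Formula A → L) : Prop :=
  ∀ (i : I) (a : A), Sat f g i (.neg (.atom a)) → cosSim (f i) (g (.atom a)) = -1

/-- `C` respects disjunction. -/
def RespectsDisj (f : I → L) (g : Formula A → L) : Prop :=
  ∀ (i : I) (d e : Formula A), Sat f g i (.or d e) → cosSim (f i) (g (.or d e)) = 1

/-- `C` respects conjunction. -/
def RespectsConj (f : I → L) (g : Formula A → L) : Prop :=
  ∀ (i : I) (d e : Formula A), Sat f g i (.and d e) → cosSim (f i) (g (.and d e)) = 1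

/-- **Main Proposition.** There is no C-complete CLIP-like model: if `C = (f, g)` is a
CLIP-like model, `I` is describable by `A`, and `(I, A)` is separable, then `C` cannot
simultaneously respect basic descriptions, negation, disjunction, and conjunction. -/
theorem no_C_complete_CLIP_like_model
    [Nontrivial L] [Nonempty A]
    (f : I → L) (g : Formula A → L)
    (hf : ∀ i : I, f i ≠ 0) (hg : ∀ d : Formula A, g d ≠ 0)
    (hdesc : Describable f g) (hsep : Separable f g) :
    ¬ (RespectsBasic f g ∧ RespectsNeg f g ∧ RespectsDisj f g ∧ RespectsConj f g) := by
  rintro ⟨hbasic, hneg, hdisj, hconj⟩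
  obtain ⟨a⟩ := ‹Nonempty A›
  obtain ⟨i, hi⟩ := hdesc.2 a
  obtain ⟨j, hj⟩ := hsep.2 a
  set d : Formula A := .or (.atom a) (.neg (.atom a))
  have hid : Sat f g i d := Or.inl hi
  have hjd : Sat f g j d := Or.inr hj
  have h1 : cosSim (f i) (g d) = 1 := hdisj i _ _ hid
  have h2 : cosSim (f j) (g d) = 1 := hdisj j _ _ hjd
  have h3 : cosSim (f i) (g (.atom a)) = 1 := hbasic i a hi
  have h4 : cosSim (f j) (g (.atom a)) = -1 := hneg j a hj
  rw [cosSim, real_inner_div_norm_mul_norm_eq_one_iff] at h1 h2 h3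
  rw [cosSim, real_inner_div_norm_mul_norm_eq_neg_one_iff] at h4
  obtain ⟨-, r, hr, hrd⟩ := h1
  obtain ⟨-, s, hs, hsd⟩ := h2
  obtain ⟨-, t, ht, htd⟩ := h3
  obtain ⟨-, u, hu, hud⟩ := h4
  -- g d = r • f i = s • f j, g a = t • f i = u • f j
  have hfj : f j = (r / s) • f i := by
    have : s • f j = r • f i := hsd.symm.trans hrd
    rw [div_eq_mul_inv, mul_comm, mul_smul, ← this, inv_smul_smul₀ hs.ne']
  have : t • f i = (u * (r / s)) • f i := by
    rw [← htd, hud, hfj, smul_smul]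
  have ht' : t = u * (r / s) := smul_left_injective ℝ (hf i) this
  nlinarith [div_pos hr hs]
end

section
/- (Strengthened main proposition, as established by the paper's proof) If C = (f, g) is a CLIP-like model, I is describable by A, (I, A) is separable, and C respects basic descriptions, negation, and disjunction, then a contradiction follows; i.e., no CLIP-like model over a describable and separable (I, A) can respect basic descriptions, negation, and disjunction simultaneously (the conjunction condition is not needed). -/
open scoped RealInnerProductSpace

variable {I A L : Type*} [NormedAddCommGroup L] [InnerProductSpace ℝ L]

/-- **Strengthened main proposition.** No CLIP-like model over a describable and separable
`(I, A)` can respect basic descriptions, negation, and disjunction simultaneously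
(the conjunction condition is not needed). -/
theorem no_CLIP_like_model_respecting_basic_neg_disj
    [Nontrivial L] [Nonempty A]
    (f : I → L) (g : Formula A → L)
    (hf : ∀ i : I, f i ≠ 0) (hg : ∀ d : Formula A, g d ≠ 0)
    (hdesc : Describable f g) (hsep : Separable f g)
    (hbasic : RespectsBasic f g) (hneg : RespectsNeg f g) (hdisj : RespectsDisj f g) :
    False := by
  obtain ⟨a⟩ := ‹Nonempty A›
  obtain ⟨i, hi⟩ := hdesc.2 a
  obtain ⟨j, hj⟩ := hsep.2 a
  have h1 : cosSim (f i) (g (.atom a)) = 1 := hbasic i a hi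
  have h2 : cosSim (f j) (g (.atom a)) = -1 := hneg j a hj
  set v : L := g (.or (.atom a) (.neg (.atom a))) with hv
  have hvi : cosSim (f i) v = 1 := hdisj i _ _ (Or.inl hi)
  have hvj : cosSim (f j) v = 1 := hdisj j _ _ (Or.inr hj)
  rw [cosSim, real_inner_div_norm_mul_norm_eq_one_iff] at hvi hvj h1
  obtain ⟨_, r, hr, hrv⟩ := hvi
  obtain ⟨_, s, hs, hsv⟩ := hvj
  obtain ⟨_, t, ht, hta⟩ := h1
  rw [cosSim, real_inner_div_norm_mul_norm_eq_neg_one_iff] at h2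
  obtain ⟨_, u, hu, hua⟩ := h2
  -- g (atom a) = t • f i and = u • f j; v = r • f i = s • f j
  have hfj : f j = (r / s) • f i := by
    have h := hrv.symm.trans hsv
    have : f j = s⁻¹ • (r • f i) := by rw [h, inv_smul_smul₀ (ne_of_gt hs)]
    rw [this, smul_smul, div_eq_inv_mul]
  have := hta.symm.trans hua
  rw [hfj, smul_smul] at this
  have hfi := hf i
  have heq : t = u * (r / s) := smul_left_injective ℝ hfi this
  have : 0 < u * (r / s) := heq ▸ ht
  have : u * (r / s) < 0 := mul_neg_of_neg_of_pos hu (div_pos hr hs)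
  linarith
end

section
/- (Lemma 1, atomic form) Suppose C = (f, g) is a CLIP-like model that respects basic descriptions and disjunction, and I is describable by A. Then there exists a nonzero vector v ∈ L such that: for every image i ∈ I there is a real t > 0 with f(i) = t • v, and for every atom a ∈ A that is satisfied by some image (∃ j ∈ I, j ⊨ a) there is a real s > 0 with g(a) = s • v. In other words, all image embeddings and all embeddings of satisfied atomic descriptions lie on a single common ray. -/
open scoped RealInnerProductSpace

variable {I A L : Type*} [NormedAddCommGroup L] [InnerProductSpace ℝ L]

lemma cosSim_comm {L : Type*} [NormedAddCommGroup L] [InnerProductSpace ℝ L]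
    (x y : L) : cosSim x y = cosSim y x := by
  unfold cosSim; rw [real_inner_comm, mul_comm]

lemma cosSim_eq_one_ray {L : Type*} [NormedAddCommGroup L] [InnerProductSpace ℝ L]
    {x y : L} (hx : x ≠ 0) (hy : y ≠ 0) (h : cosSim x y = 1) :
    ∃ t : ℝ, 0 < t ∧ y = t • x := by
  have hnx : ‖x‖ ≠ 0 := norm_ne_zero_iff.mpr hx
  have hny : ‖y‖ ≠ 0 := norm_ne_zero_iff.mpr hy
  have h1 : ⟪x, y⟫ = ‖x‖ * ‖y‖ := by
    have := h
    unfold cosSim at this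
    field_simp at this
    linarith [this]
  have h2 : ‖y‖ • x = ‖x‖ • y := inner_eq_norm_mul_iff_real.mp h1
  refine ⟨‖y‖ / ‖x‖, by positivity, ?_⟩
  rw [div_eq_inv_mul, mul_smul, h2, inv_smul_smul₀ hnx]

/-- **Lemma 1 (atomic form).** All image embeddings and all embeddings of satisfied atomic
descriptions lie on a single common ray. -/
theorem lemma1_atomic
    [Nontrivial L]
    (f : I → L) (g : Formula A → L)
    (hf : ∀ i : I, f i ≠ 0) (hg : ∀ d : Formula A, g d ≠ 0)
    (hbasic : RespectsBasic f g) (hdisj : RespectsDisj f g)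
    (hdesc : Describable f g) :
    ∃ v : L, v ≠ 0 ∧
      (∀ i : I, ∃ t : ℝ, 0 < t ∧ f i = t • v) ∧
      (∀ a : A, (∃ j : I, Sat f g j (.atom a)) →
        ∃ s : ℝ, 0 < s ∧ g (.atom a) = s • v) := by

  by_cases hA : Nonempty A
  · obtain ⟨a₀⟩ := hA
    set d₀ : Formula A := .or (.atom a₀) (.neg (.atom a₀)) with hd₀
    set v := g d₀ with hv
    have hsat : ∀ i : I, Sat f g i d₀ := fun i => em _
    have hfi : ∀ i : I, ∃ t : ℝ, 0 < t ∧ f i = t • v := by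
      intro i
      exact cosSim_eq_one_ray (hg d₀) (hf i)
        (by rw [cosSim_comm]; exact hdisj i _ _ (hsat i))
    refine ⟨v, hg d₀, hfi, ?_⟩
    rintro a ⟨j, hj⟩
    obtain ⟨t, ht, hft⟩ := hfi j
    obtain ⟨s, hs, hgs⟩ := cosSim_eq_one_ray (hf j) (hg (.atom a)) (hbasic j a hj)
    exact ⟨s * t, by positivity, by rw [hgs, hft, smul_smul]⟩
  · obtain ⟨v, hv⟩ := exists_ne (0 : L)
    exact ⟨v, hv, fun i => (hA ⟨(hdesc.1 i).choose⟩).elim, fun a _ => (hA ⟨a⟩).elim⟩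
end

section
/- (Lemma 2) Suppose C = (f, g) is a CLIP-like model that respects basic descriptions, negation, and disjunction, and I is describable by A. Then there exists a nonzero vector v ∈ L such that: (i) every f(i) for i ∈ I, and every g(a) for an atom a satisfied by some image, is a positive scalar multiple of v; and (ii) for every i ∈ I and atom a ∈ A with i ⊨ ¬a, g(a) is a positive scalar multiple of −v. That is, embeddings of falsified atomic descriptions lie on the anti-ray of the ray from Lemma 1. -/
open scoped RealInnerProductSpace

variable {I A L : Type*} [NormedAddCommGroup L] [InnerProductSpace ℝ L]

/-- **Lemma 2.** Embeddings of falsified atomic descriptions lie on the anti-ray of the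
ray from Lemma 1. -/
theorem lemma2
    [Nontrivial L]
    (f : I → L) (g : Formula A → L)
    (hf : ∀ i : I, f i ≠ 0) (hg : ∀ d : Formula A, g d ≠ 0)
    (hbasic : RespectsBasic f g) (hneg : RespectsNeg f g) (hdisj : RespectsDisj f g)
    (hdesc : Describable f g) :
    ∃ v : L, v ≠ 0 ∧
      (∀ i : I, ∃ t : ℝ, 0 < t ∧ f i = t • v) ∧
      (∀ a : A, (∃ j : I, Sat f g j (.atom a)) →
        ∃ s : ℝ, 0 < s ∧ g (.atom a) = s • v) ∧
      (∀ (i : I) (a : A), Sat f g i (.neg (.atom a)) →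
        ∃ s : ℝ, 0 < s ∧ g (.atom a) = s • (-v)) := by
    -- auxiliary facts
  have ray : ∀ (x y : L), cosSim x y = 1 → ∃ r : ℝ, 0 < r ∧ y = r • x := by
    intro x y h
    exact ((real_inner_div_norm_mul_norm_eq_one_iff x y).1 h).2
  by_cases hI : Nonempty I
  · obtain ⟨i₀⟩ := hI
    refine ⟨f i₀, hf i₀, ?_, ?_, ?_⟩
    · -- all images on ray of f i₀
      intro i
      obtain ⟨a, ha⟩ := hdesc.1 i₀
      obtain ⟨b, hb⟩ := hdesc.1 i
      have h₀ : Sat f g i₀ (.or (.atom a) (.atom b)) := Or.inl ha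
      have h₁ : Sat f g i (.or (.atom a) (.atom b)) := Or.inr hb
      obtain ⟨r, hr, hre⟩ := ray _ _ (hdisj i₀ _ _ h₀)
      obtain ⟨s, hs, hse⟩ := ray _ _ (hdisj i _ _ h₁)
      refine ⟨r / s, div_pos hr hs, ?_⟩
      have : s • f i = r • f i₀ := by rw [← hse, ← hre]
      have := congrArg (fun z => s⁻¹ • z) this
      simpa [smul_smul, inv_mul_cancel₀ hs.ne', div_eq_inv_mul, mul_comm] using this
    · intro a ⟨j, hj⟩
      obtain ⟨r, hr, hre⟩ := ray _ _ (hbasic j a hj)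
      -- f j = t • f i₀
      obtain ⟨b, hb⟩ := hdesc.1 i₀
      have h₀ : Sat f g i₀ (.or (.atom b) (.atom a)) := Or.inl hb
      have h₁ : Sat f g j (.or (.atom b) (.atom a)) := Or.inr hj
      obtain ⟨p, hp, hpe⟩ := ray _ _ (hdisj i₀ _ _ h₀)
      obtain ⟨q, hq, hqe⟩ := ray _ _ (hdisj j _ _ h₁)
      have hfj : f j = (p / q) • f i₀ := by
        have : q • f j = p • f i₀ := by rw [← hqe, ← hpe]
        have := congrArg (fun z => q⁻¹ • z) this
        simpa [smul_smul, inv_mul_cancel₀ hq.ne', div_eq_inv_mul, mul_comm] using this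
      refine ⟨r * (p / q), mul_pos hr (div_pos hp hq), ?_⟩
      rw [hre, hfj, smul_smul]
    · intro i a hia
      have hneg1 : cosSim (f i) (g (.atom a)) = -1 := hneg i a hia
      obtain ⟨r, hr, hre⟩ := ((real_inner_div_norm_mul_norm_eq_neg_one_iff (f i) (g (.atom a))).1 hneg1).2
      -- f i = t • f i₀
      obtain ⟨b, hb⟩ := hdesc.1 i₀
      obtain ⟨c, hc⟩ := hdesc.1 i
      have h₀ : Sat f g i₀ (.or (.atom b) (.atom c)) := Or.inl hb
      have h₁ : Sat f g i (.or (.atom b) (.atom c)) := Or.inr hc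
      obtain ⟨p, hp, hpe⟩ := ray _ _ (hdisj i₀ _ _ h₀)
      obtain ⟨q, hq, hqe⟩ := ray _ _ (hdisj i _ _ h₁)
      have hfi : f i = (p / q) • f i₀ := by
        have : q • f i = p • f i₀ := by rw [← hqe, ← hpe]
        have := congrArg (fun z => q⁻¹ • z) this
        simpa [smul_smul, inv_mul_cancel₀ hq.ne', div_eq_inv_mul, mul_comm] using this
      refine ⟨(-r) * (p / q), mul_pos (neg_pos.2 hr) (div_pos hp hq), ?_⟩
      rw [hre, hfi, smul_smul, smul_neg, ← neg_smul]
      ring_nf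
  · obtain ⟨v, hv⟩ := exists_ne (0 : L)
    exact ⟨v, hv, fun i => absurd ⟨i⟩ hI, fun a ⟨j, _⟩ => absurd ⟨j⟩ hI,
      fun i => absurd ⟨i⟩ hI⟩
end

section
/- (Corollary 1, part 1) Suppose C = (f, g) is a CLIP-like model that respects basic descriptions, negation, and disjunction, and I is describable by A. Fix any image j ∈ I (so that f(j) determines the common ray R of Lemma 1). Then for every atom a ∈ A, if there exists i ∈ I with i ⊨ ¬a, then α(f(j), g(a)) = −1; equivalently, g(a) is a positive scalar multiple of −f(j), i.e., g(a) lies on the anti-ray of R. -/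
open scoped RealInnerProductSpace

variable {I A L : Type*} [NormedAddCommGroup L] [InnerProductSpace ℝ L]

lemma cosSim_eq_one_exists {x y : L} (hx : x ≠ 0) (hy : y ≠ 0)
    (h : cosSim x y = 1) : ∃ t : ℝ, 0 < t ∧ y = t • x := by
  have hxn : ‖x‖ ≠ 0 := norm_ne_zero_iff.mpr hx
  have hyn : ‖y‖ ≠ 0 := norm_ne_zero_iff.mpr hy
  have hinner : ⟪x, y⟫ = ‖x‖ * ‖y‖ := by
    have := (div_eq_one_iff_eq (by positivity : ‖x‖ * ‖y‖ ≠ 0)).mp h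
    simpa [cosSim] using this
  have hsm : ‖y‖ • x = ‖x‖ • y := (inner_eq_norm_mul_iff_real).mp hinner
  refine ⟨‖y‖ / ‖x‖, by positivity, ?_⟩
  rw [div_eq_inv_mul, ← smul_smul, hsm, smul_smul, inv_mul_cancel₀ hxn, one_smul]

lemma cosSim_neg_right (x y : L) : cosSim x (-y) = - cosSim x y := by
  simp [cosSim, neg_div]

lemma cosSim_smul_neg {x : L} (hx : x ≠ 0) {t : ℝ} (ht : 0 < t) :
    cosSim x (t • (-x)) = -1 := by
  have hxn : ‖x‖ ≠ 0 := norm_ne_zero_iff.mpr hx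
  have : ⟪x, t • (-x)⟫ = -(t * (‖x‖ * ‖x‖)) := by
    rw [real_inner_smul_right, inner_neg_right, real_inner_self_eq_norm_mul_norm]
    ring
  rw [cosSim, this, norm_smul, norm_neg]
  rw [Real.norm_eq_abs, abs_of_pos ht]
  field_simp

/-- **Corollary 1, part 1.** Fixing any image `j` (so `f j` determines the common ray of
Lemma 1): for every atom `a`, if some image falsifies `a`, then `α(f j, g a) = -1`;
equivalently `g a` lies on the anti-ray of the ray of `f j`. -/
theorem corollary1_part1
    (f : I → L) (g : Formula A → L)
    (hf : ∀ i : I, f i ≠ 0) (hg : ∀ d : Formula A, g d ≠ 0)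
    (hbasic : RespectsBasic f g) (hneg : RespectsNeg f g) (hdisj : RespectsDisj f g)
    (hdesc : Describable f g) (j : I) :
    ∀ a : A, (∃ i : I, Sat f g i (.neg (.atom a))) →
      cosSim (f j) (g (.atom a)) = -1 ∧
      ∃ t : ℝ, 0 < t ∧ g (.atom a) = t • (-(f j)) := by
  intro a ⟨i, hi⟩
  -- cosSim (f i) (g a) = -1
  have hia : cosSim (f i) (g (.atom a)) = -1 := hneg i a hi
  -- f i and f j lie on a common ray via a disjunction
  obtain ⟨c, hc⟩ := hdesc.1 i
  obtain ⟨b, hb⟩ := hdesc.1 j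
  have hio : Sat f g i (.or (.atom c) (.atom b)) := Or.inl hc
  have hjo : Sat f g j (.or (.atom c) (.atom b)) := Or.inr hb
  obtain ⟨t1, ht1, he1⟩ := cosSim_eq_one_exists (hf i) (hg _) (hdisj i _ _ hio)
  obtain ⟨t2, ht2, he2⟩ := cosSim_eq_one_exists (hf j) (hg _) (hdisj j _ _ hjo)
  -- f i = (t2/t1) • f j
  have hfi : f i = (t2 / t1) • f j := by
    have : t1 • f i = t2 • f j := he1 ▸ he2
    have := congrArg (fun v => t1⁻¹ • v) this
    simpa [smul_smul, inv_mul_cancel₀ ht1.ne', div_eq_inv_mul] using this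
  -- g a = s • (-(f i)) for some s > 0
  have hone : cosSim (f i) (-(g (.atom a))) = 1 := by
    rw [cosSim_neg_right, hia]; ring
  obtain ⟨s, hs, hes⟩ := cosSim_eq_one_exists (hf i) (neg_ne_zero.mpr (hg _)) hone
  have hga : g (.atom a) = (s * (t2 / t1)) • (-(f j)) := by
    have : g (.atom a) = s • (-(f i)) := by
      have := congrArg Neg.neg hes
      simpa [smul_neg] using this
    rw [this, hfi]
    simp [smul_smul, smul_neg]
  have hpos : 0 < s * (t2 / t1) := by positivity
  refine ⟨?_, s * (t2 / t1), hpos, hga⟩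
  rw [hga]
  exact cosSim_smul_neg (hf j) hpos
end

section
/- (Corollary 1, part 2, in impossibility form) Suppose C = (f, g) is a CLIP-like model that respects basic descriptions, negation, and disjunction, and I is describable by A. Then for every atom a ∈ A there do not exist images p, q ∈ I with p ⊨ a and q ⊨ ¬a; i.e., no atomic description is simultaneously satisfied by one image and falsified by another (otherwise g(a) would lie in the intersection of a ray with its anti-ray, which is empty). -/
open scoped RealInnerProductSpace

variable {I A L : Type*} [NormedAddCommGroup L] [InnerProductSpace ℝ L]

/-- **Corollary 1, part 2 (impossibility form).** No atomic description is simultaneously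
satisfied by one image and falsified by another. -/
theorem corollary1_part2
    (f : I → L) (g : Formula A → L)
    (hf : ∀ i : I, f i ≠ 0) (hg : ∀ d : Formula A, g d ≠ 0)
    (hbasic : RespectsBasic f g) (hneg : RespectsNeg f g) (hdisj : RespectsDisj f g)
    (hdesc : Describable f g) :
    ∀ a : A, ¬ ∃ (p q : I), Sat f g p (.atom a) ∧ Sat f g q (.neg (.atom a)) := by
  intro a ⟨p, q, hp, hq⟩
  have hq' : Sat f g q (.neg (.atom a)) := hq
  -- q satisfies a ∨ ¬a, p satisfies a ∨ ¬a
  have hpor : Sat f g p (.or (.atom a) (.neg (.atom a))) := Or.inl hp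
  have hqor : Sat f g q (.or (.atom a) (.neg (.atom a))) := Or.inr hq
  set v := g (.or (.atom a) (.neg (.atom a))) with hv
  have h1 : cosSim (f p) v = 1 := hdisj p _ _ hpor
  have h2 : cosSim (f q) v = 1 := hdisj q _ _ hqor
  have h3 : cosSim (f p) (g (.atom a)) = 1 := hbasic p a hp
  have h4 : cosSim (f q) (g (.atom a)) = -1 := hneg q a hq
  rw [cosSim, real_inner_div_norm_mul_norm_eq_one_iff] at h1 h2 h3
  rw [cosSim, real_inner_div_norm_mul_norm_eq_neg_one_iff] at h4
  obtain ⟨_, r, hr, hrv⟩ := h1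
  obtain ⟨_, s, hs, hsv⟩ := h2
  obtain ⟨_, t, ht, htv⟩ := h3
  obtain ⟨_, u, hu, huv⟩ := h4
  -- v = r • f p = s • f q, so f q = (r/s) • f p
  have hfq : f q = (r / s) • f p := by
    have h := hrv.symm.trans hsv
    rw [div_eq_mul_inv, mul_comm, mul_smul, h, smul_smul, inv_mul_cancel₀ hs.ne', one_smul]
  -- g a = t • f p and g a = u • f q = u (r/s) • f p with u(r/s) < 0, t > 0
  have : t • f p = (u * (r / s)) • f p := by
    rw [← htv, huv, hfq, smul_smul]
  have ht' : t = u * (r / s) := by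
    have := sub_eq_zero.mpr this
    rw [← sub_smul] at this
    rcases smul_eq_zero.mp this with h | h
    · linarith [sub_eq_zero.mp h]
    · exact absurd h (hf p)
  nlinarith [div_pos hr hs]
end
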